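/- Let Γ be a connected graph with weight function ω into ℤ_k, and suppose Γ contains a cycle C of even length with gcd(ω(C), k) = 1. Then the cross-cover Γ^ω is connected. -/

import Mathlib

/-- The alternating weight of a walk. -/
def altWeight {V : Type*} {k : ℕ} {Γ : SimpleGraph V} (ω : Sym2 V → ZMod k) :
    ∀ {u v : V}, Γ.Walk u v → ZMod k
  | _, _, SimpleGraph.Walk.nil => 0
  | _, _, @SimpleGraph.Walk.cons _ _ a b _ _ q => ω s(a, b) - altWeight ω q

/-- The cross-cover `Γ^ω`: vertex set `V × ℤ_k`, with `(u,i)` adjacent to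
`(v, ω(e) - i)` for each edge `e = uv` and each `i ∈ ℤ_k`. -/
def crossCover {V : Type*} {k : ℕ} (Γ : SimpleGraph V) (ω : Sym2 V → ZMod k) :
    SimpleGraph (V × ZMod k) where
  Adj p q := Γ.Adj p.1 q.1 ∧ p.2 + q.2 = ω s(p.1, q.1)
  symm := ⟨by
    rintro ⟨u, i⟩ ⟨v, j⟩ ⟨h, he⟩
    refine ⟨h.symm, ?_⟩
    rw [add_comm, Sym2.eq_swap]
    exact he⟩
  loopless := ⟨by
    rintro ⟨u, i⟩ ⟨h, _⟩
    exact Γ.irrefl h⟩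

/-- Lifting a walk to the cross-cover. -/
lemma crossCover_reach_walk {V : Type*} {k : ℕ} {Γ : SimpleGraph V}
    (ω : Sym2 V → ZMod k) :
    ∀ {u v : V} (q : Γ.Walk u v) (i : ZMod k),
      (crossCover Γ ω).Reachable (u, i)
        (v, (-1 : ZMod k) ^ q.length * (i - altWeight ω q)) := by
  intro u v q
  induction q with
  | nil =>
    intro i
    simpa [altWeight] using SimpleGraph.Reachable.refl _
  | @cons a b c h q ih =>
    intro i
    have step : (crossCover Γ ω).Adj (a, i) (b, ω s(a, b) - i) :=
      ⟨h, by ring⟩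
    have := (step.reachable).trans (ih (ω s(a, b) - i))
    have heq : (-1 : ZMod k) ^ q.length * ((ω s(a, b) - i) - altWeight ω q)
        = (-1 : ZMod k) ^ (SimpleGraph.Walk.cons h q).length *
          (i - altWeight ω (SimpleGraph.Walk.cons h q)) := by
      show _ = (-1 : ZMod k) ^ (q.length + 1) * (i - (ω s(a, b) - altWeight ω q))
      ring
    rwa [heq] at this

lemma isUnit_of_gcd_val {k : ℕ} (a : ZMod k) (h : Nat.gcd a.val k = 1) :
    IsUnit a := by
  cases k with
  | zero =>
    have : (a : ℤ).natAbs = 1 := by simpa [ZMod.val] using h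
    exact Int.isUnit_iff.mpr (Int.natAbs_eq_iff.mp this)
  | succ n =>
    have := (ZMod.isUnit_iff_coprime a.val (n + 1)).mpr h
    rwa [ZMod.natCast_zmod_val] at this

/-- If `Γ` is connected and contains a cycle `C` of even length with
`gcd(ω(C), k) = 1`, then the cross-cover `Γ^ω` is connected. -/
theorem crossCover_connected {V : Type*} {k : ℕ} {Γ : SimpleGraph V}
    (ω : Sym2 V → ZMod k) (hconn : Γ.Connected) {u : V} (p : Γ.Walk u u)
    (hcyc : p.IsCycle) (hEven : Even p.length)
    (hgcd : Nat.gcd (altWeight ω p).val k = 1) :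
    (crossCover Γ ω).Connected := by
  set a : ZMod k := altWeight ω p with ha
  -- one traversal of the cycle
  have step : ∀ i : ZMod k, (crossCover Γ ω).Reachable (u, i) (u, i - a) := by
    intro i
    have := crossCover_reach_walk ω p i
    rwa [hEven.neg_one_pow, one_mul] at this
  -- n traversals
  have natstep : ∀ (n : ℕ) (i : ZMod k),
      (crossCover Γ ω).Reachable (u, i) (u, i - (n : ZMod k) * a) := by
    intro n
    induction n with
    | zero =>
      intro i
      simpa using SimpleGraph.Reachable.refl ((u, i) : V × ZMod k)
    | succ n ih =>
      intro i
      have := (step i).trans (ih (i - a))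
      have heq : i - a - (n : ZMod k) * a = i - ((n : ℕ) + 1 : ZMod k) * a := by ring
      rwa [heq, ← Nat.cast_succ] at this
  -- reach any fiber element over u
  have fiber : ∀ i j : ZMod k, (crossCover Γ ω).Reachable (u, i) (u, j) := by
    intro i j
    obtain ⟨b, hb⟩ := isUnit_of_gcd_val a hgcd
    obtain ⟨z, hz⟩ := ZMod.intCast_surjective ((i - j) * (↑b⁻¹ : ZMod k))
    have hza : (z : ZMod k) * a = i - j := by
      rw [hz, mul_assoc, ← hb, Units.inv_mul, mul_one]
    rcases le_or_gt 0 z with hzpos | hzneg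
    · lift z to ℕ using hzpos with n
      have := natstep n i
      rw [show ((n : ℤ) : ZMod k) = (n : ZMod k) by push_cast; ring] at hza
      rwa [hza, sub_sub_cancel] at this
    · set m : ℕ := (-z).toNat with hm
      have hmz : ((m : ℤ) : ZMod k) = -(z : ZMod k) := by
        rw [hm, Int.toNat_of_nonneg (by omega)]
        push_cast; ring
      have := natstep m j
      have heq : j - (m : ZMod k) * a = i := by
        have : (m : ZMod k) * a = -(i - j) := by
          rw [show ((m : ℕ) : ZMod k) = ((m : ℤ) : ZMod k) by push_cast; ring, hmz,
            neg_mul, hza]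
        rw [this]; ring
      rw [heq] at this
      exact this.symm
  rw [SimpleGraph.connected_iff]
  refine ⟨?_, ⟨(u, 0)⟩⟩
  rintro ⟨v, i⟩ ⟨w, j⟩
  have reachTo : ∀ (v : V) (i : ZMod k),
      (crossCover Γ ω).Reachable (v, i) (u, 0) := by
    intro v i
    obtain ⟨q⟩ := hconn.preconnected v u
    exact (crossCover_reach_walk ω q i).trans
      (fiber ((-1 : ZMod k) ^ q.length * (i - altWeight ω q)) 0)
  exact (reachTo v i).trans (reachTo w j).symm
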